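/- Let E/F be a quadratic extension of non-archimedean local fields of characteristic zero. If the conductor f(E/F) of the extension (the valuation of the different) is odd, then there exists a uniformizer of E of trace zero; if f(E/F) is even, then there exists a unit of O_E of trace zero. -/

import Mathlib

/-- Let `E/F` be a quadratic extension of non-archimedean local fields of
characteristic zero, with non-trivial Galois involution `σ` and trace
`Tr(x) = x + σ x`.  Let `f = v_E(𝔡_{E/F})` be the valuation of the different,
characterized by the property that `x` lies in the inverse different (i.e.
`Tr(x·O_E) ⊆ O_F`) iff `v_E(x) ≥ -f`.  If `f` is odd there exists a uniformizer of
`E` (element of valuation `1`) of trace zero; if `f` is even there exists a unit of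
`O_E` (element of valuation `0`) of trace zero. -/
theorem exists_traceZero_uniformizer_or_unit
    (E : Type*) [Field E] [CharZero E]
    (v : E → ℤ)
    (hmul : ∀ x y : E, x ≠ 0 → y ≠ 0 → v (x * y) = v x + v y)
    (hadd : ∀ x y : E, x ≠ 0 → y ≠ 0 → x + y ≠ 0 → min (v x) (v y) ≤ v (x + y))
    (hsurj : ∀ n : ℤ, ∃ x : E, x ≠ 0 ∧ v x = n)
    (σ : E ≃+* E) (hσ2 : ∀ x, σ (σ x) = x) (hσne : ∃ x, σ x ≠ x)
    (hσv : ∀ x, v (σ x) = v x)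
    (f : ℤ)
    (hf : ∀ x : E, x ≠ 0 →
      ((∀ y : E, y ≠ 0 → 0 ≤ v y →
          (x * y + σ (x * y) = 0 ∨ 0 ≤ v (x * y + σ (x * y)))) ↔ -f ≤ v x)) :
    (Odd f → ∃ Δ : E, Δ ≠ 0 ∧ v Δ = 1 ∧ Δ + σ Δ = 0) ∧
    (Even f → ∃ Δ : E, Δ ≠ 0 ∧ v Δ = 0 ∧ Δ + σ Δ = 0) := by
  have h2 : (2:E) ≠ 0 := two_ne_zero
  have hσtwo : σ (2:E) = 2 := by
    rw [show (2:E) = 1 + 1 by norm_num, map_add, map_one]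
  have hσne0 : ∀ x : E, x ≠ 0 → σ x ≠ 0 := fun x hx h => hx (by rw [← hσ2 x, h, map_zero])
  have hv1 : v 1 = 0 := by
    have := hmul 1 1 one_ne_zero one_ne_zero
    rw [mul_one] at this; omega
  have hvinv : ∀ x : E, x ≠ 0 → v x⁻¹ = -v x := by
    intro x hx
    have := hmul x x⁻¹ hx (inv_ne_zero hx)
    rw [mul_inv_cancel₀ hx, hv1] at this; omega
  have hvdiv : ∀ x y : E, x ≠ 0 → y ≠ 0 → v (x / y) = v x - v y := by
    intro x y hx hy
    rw [div_eq_mul_inv, hmul x y⁻¹ hx (inv_ne_zero hy), hvinv y hy]; ring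
  have hvneg : ∀ x : E, x ≠ 0 → v (-x) = v x := by
    intro x hx
    have hm1 : v (-1 : E) = 0 := by
      have := hmul (-1) (-1) (by norm_num) (by norm_num)
      rw [show ((-1:E) * -1) = 1 by ring, hv1] at this; omega
    rw [show (-x : E) = (-1) * x by ring, hmul _ _ (by norm_num) hx, hm1]; ring
  have hne0 : ∀ x y : E, x ≠ 0 → v x ≠ v y → x + y ≠ 0 := by
    intro x y hx hne h
    have hy : y = -x := eq_neg_of_add_eq_zero_right h
    have hvy : v y = v x := by rw [hy, hvneg x hx]
    exact hne hvy.symm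
  have hmin : ∀ x y : E, x ≠ 0 → y ≠ 0 → v x < v y → x + y ≠ 0 ∧ v (x + y) = v x := by
    intro x y hx hy hlt
    have hxy : x + y ≠ 0 := hne0 x y hx (by omega)
    have h1 : min (v x) (v y) ≤ v (x + y) := hadd x y hx hy hxy
    have h2' : min (v (x + y)) (v (-y)) ≤ v ((x + y) + -y) := by
      apply hadd _ _ hxy (neg_ne_zero.mpr hy)
      rw [show (x + y) + -y = x by ring]; exact hx
    rw [show (x + y) + -y = x by ring, hvneg y hy] at h2'
    exact ⟨hxy, by omega⟩
  have hfix : ∀ m : ℤ, ∃ g : E, g ≠ 0 ∧ σ g = g ∧ v g = 2 * m := by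
    intro m
    obtain ⟨x, hx, hvx⟩ := hsurj m
    refine ⟨x * σ x, mul_ne_zero hx (hσne0 x hx), ?_, ?_⟩
    · rw [map_mul, hσ2 x, mul_comm]
    · rw [hmul x (σ x) hx (hσne0 x hx), hσv x, hvx]; ring
  have hA : ∀ z : E, z ≠ 0 → -f ≤ v z → (z + σ z = 0 ∨ 0 ≤ v (z + σ z)) := by
    intro z hz hvz
    have := ((hf z hz).mpr hvz) 1 one_ne_zero (le_of_eq hv1.symm)
    simpa using this
  have hB' : ∃ z : E, z ≠ 0 ∧ v z = -f - 1 ∧ z + σ z ≠ 0 ∧ v (z + σ z) < 0 := by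
    obtain ⟨x, hx, hvx⟩ := hsurj (-f - 1)
    have hnot : ¬ (∀ y : E, y ≠ 0 → 0 ≤ v y →
        (x * y + σ (x * y) = 0 ∨ 0 ≤ v (x * y + σ (x * y)))) := by
      intro hP
      have := (hf x hx).mp hP
      omega
    push_neg at hnot
    obtain ⟨y, hy, hvy, hne, hvlt⟩ := hnot
    refine ⟨x * y, mul_ne_zero hx hy, ?_, hne, hvlt⟩
    have hvz : v (x * y) = -f - 1 + v y := by rw [hmul x y hx hy, hvx]
    by_contra hc
    have hge : -f ≤ v (x * y) := by omega
    rcases hA _ (mul_ne_zero hx hy) hge with h | h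
    · exact hne h
    · omega
  have hdecomp : ∀ z : E, z + σ z ≠ 0 →
      ∃ a : E, a ≠ 0 ∧ σ a = a ∧ v a = v (z + σ z) - v 2 ∧
        σ (z - a) = -(z - a) ∧ a + a = z + σ z := by
    intro z hw
    refine ⟨(z + σ z)/2, div_ne_zero hw h2, ?_, hvdiv _ _ hw h2, ?_, ?_⟩
    · rw [map_div₀, map_add, hσ2 z, hσtwo, add_comm]
    · rw [map_sub, map_div₀, map_add, hσ2 z, hσtwo]
      field_simp
      ring
    · field_simp
      norm_num
  obtain ⟨x₀, hx₀⟩ := hσne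
  set Δ₀ := x₀ - σ x₀ with hΔ₀def
  have hΔ₀0 : Δ₀ ≠ 0 := sub_ne_zero.mpr (Ne.symm hx₀)
  have hΔ₀σ : σ Δ₀ = -Δ₀ := by rw [hΔ₀def, map_sub, hσ2 x₀]; ring
  suffices key : ∃ Δ : E, Δ ≠ 0 ∧ σ Δ = -Δ ∧ Even (v Δ - f) by
    obtain ⟨Δ, hΔ0, hΔσ, hΔpar⟩ := key
    obtain ⟨r, hr⟩ := hΔpar
    constructor
    · intro hfodd
      obtain ⟨j, hj⟩ := hfodd
      obtain ⟨g, hg0, hgσ, hgv⟩ := hfix (-r - j)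
      refine ⟨Δ * g, mul_ne_zero hΔ0 hg0, ?_, ?_⟩
      · rw [hmul _ _ hΔ0 hg0, hgv]; omega
      · rw [map_mul, hΔσ, hgσ]; ring
    · intro hfeven
      obtain ⟨j, hj⟩ := hfeven
      obtain ⟨g, hg0, hgσ, hgv⟩ := hfix (-r - j)
      refine ⟨Δ * g, mul_ne_zero hΔ0 hg0, ?_, ?_⟩
      · rw [hmul _ _ hΔ0 hg0, hgv]; omega
      · rw [map_mul, hΔσ, hgσ]; ring
  by_cases hAodd : ∃ g : E, g ≠ 0 ∧ σ g = g ∧ Odd (v g)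
  · obtain ⟨g, hg0, hgσ, hgodd⟩ := hAodd
    rcases Int.even_or_odd (v Δ₀ - f) with he | ho
    · exact ⟨Δ₀, hΔ₀0, hΔ₀σ, he⟩
    · refine ⟨Δ₀ * g, mul_ne_zero hΔ₀0 hg0, ?_, ?_⟩
      · rw [map_mul, hΔ₀σ, hgσ]; ring
      · rw [hmul _ _ hΔ₀0 hg0]
        obtain ⟨a, ha⟩ := ho; obtain ⟨b, hb⟩ := hgodd
        exact ⟨a + b + 1, by omega⟩
  · push_neg at hAodd
    have hBfix : ∀ g : E, g ≠ 0 → σ g = g → Even (v g) := by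
      intro g h1 h2'
      rcases Int.even_or_odd (v g) with h | h
      · exact h
      · exact absurd h (by simpa [Int.odd_iff, Int.even_iff] using hAodd g h1 h2')
    refine ⟨Δ₀, hΔ₀0, hΔ₀σ, ?_⟩
    by_contra hcon
    have hodd : Odd (v Δ₀ - f) := Int.not_even_iff_odd.mp hcon
    set d := v Δ₀ with hd
    have htz : ∀ b : E, b ≠ 0 → σ b = -b → Even (v b - d) := by
      intro b hb hbσ
      have hg : σ (b / Δ₀) = b / Δ₀ := by rw [map_div₀, hbσ, hΔ₀σ, neg_div_neg_eq]
      have := hBfix (b / Δ₀) (div_ne_zero hb hΔ₀0) hg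
      rwa [hvdiv b Δ₀ hb hΔ₀0] at this
    have hTe : Even (v 2) := hBfix 2 h2 hσtwo
    obtain ⟨z₀, hz₀0, hz₀v, hw₀0, hw₀v⟩ := hB'
    obtain ⟨a₀, ha₀0, ha₀σ, ha₀v, hb₀σ, ha₀sum⟩ := hdecomp z₀ hw₀0
    set b₀ := z₀ - a₀ with hb₀def
    have hz₀ab : z₀ = a₀ + b₀ := by rw [hb₀def]; ring
    have ha₀e : Even (v a₀) := hBfix a₀ ha₀0 ha₀σ
    have ha₀low : v a₀ < -f := by
      by_contra hc
      rcases hA a₀ ha₀0 (by omega) with h | h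
      · rw [ha₀σ] at h
        exact hw₀0 (by rw [← ha₀sum]; exact h)
      · rw [ha₀σ] at h; rw [ha₀sum] at h; omega
    rcases Int.even_or_odd f with hfe | hfo
    · -- f even, hence d odd
      have hdo : Odd d := by
        obtain ⟨k, hk⟩ := hodd; obtain ⟨q, hq⟩ := hfe; exact ⟨k + q, by omega⟩
      have hb₀0 : b₀ ≠ 0 := by
        intro h
        have hz₀a : z₀ = a₀ := by rw [hb₀def] at h; exact sub_eq_zero.mp h
        rw [hz₀a] at hz₀v
        obtain ⟨p, hp⟩ := ha₀e; obtain ⟨q, hq⟩ := hfe; omega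
      have hb₀odd : Odd (v b₀) := by
        obtain ⟨k, hk⟩ := htz b₀ hb₀0 hb₀σ; obtain ⟨s, hs⟩ := hdo; exact ⟨k + s, by omega⟩
      obtain ⟨p, hp⟩ := ha₀e; obtain ⟨q, hq⟩ := hfe; obtain ⟨r, hr⟩ := hb₀odd
      rcases lt_trichotomy (v a₀) (v b₀) with h | h | h
      · have := (hmin a₀ b₀ ha₀0 hb₀0 h).2
        rw [← hz₀ab] at this; omega
      · omega
      · have := (hmin b₀ a₀ hb₀0 ha₀0 h).2
        rw [add_comm, ← hz₀ab] at this; omega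
    · -- f odd, hence d even
      have htze : ∀ b : E, b ≠ 0 → σ b = -b → Even (v b) := by
        intro b hb hbσ
        obtain ⟨k, hk⟩ := hodd; obtain ⟨j, hj⟩ := hfo; obtain ⟨r, hr⟩ := htz b hb hbσ
        exact ⟨k + j + r + 1, by omega⟩
      have hbnd : ∀ η : E, η ≠ 0 → σ η = -η → v η = 0 → v (1 + η) ≤ v 2 + 1 - f := by
        intro η hη hησ hηv
        have h1η : (1:E) + η ≠ 0 := by
          intro h
          have hη1 : η = -1 := eq_neg_of_add_eq_zero_right h
          rw [hη1, map_neg, map_one] at hησ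
          norm_num at hησ
        by_contra hgt
        push_neg at hgt
        obtain ⟨t, ht⟩ := hTe
        obtain ⟨s, hs0, hsσ, hsv⟩ := hfix (-t - 1)
        have hz0 : s * (1 + η) ≠ 0 := mul_ne_zero hs0 h1η
        have hvz : v (s * (1 + η)) = v s + v (1 + η) := hmul _ _ hs0 h1η
        have htr : s * (1 + η) + σ (s * (1 + η)) = 2 * s := by
          rw [map_mul, hsσ, map_add, map_one, hησ]; ring
        rcases hA _ hz0 (by omega) with h | h
        · rw [htr] at h; exact (mul_ne_zero h2 hs0) h
        · rw [htr, hmul 2 s h2 hs0] at h; omega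
      -- construct a trace-zero unit with odd v(1+η'')
      obtain ⟨z₁, hz₁0, hz₁v⟩ := hsurj 1
      have hw₁0 : z₁ + σ z₁ ≠ 0 := by
        intro h
        have hσz₁ : σ z₁ = -z₁ := eq_neg_of_add_eq_zero_right h
        obtain ⟨r, hr⟩ := htze z₁ hz₁0 hσz₁; omega
      obtain ⟨a₁, ha₁0, ha₁σ, ha₁v, hb₁σ, ha₁sum⟩ := hdecomp z₁ hw₁0
      set b₁ := z₁ - a₁ with hb₁def
      have hz₁ab : a₁ + b₁ = z₁ := by rw [hb₁def]; ring
      have hb₁0 : b₁ ≠ 0 := by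
        intro h
        have hz₁a : z₁ = a₁ := by rw [hb₁def] at h; exact sub_eq_zero.mp h
        obtain ⟨r, hr⟩ := hBfix z₁ hz₁0 (by rw [hz₁a]; exact ha₁σ)
        omega
      have ha₁e : Even (v a₁) := hBfix a₁ ha₁0 ha₁σ
      have hb₁e : Even (v b₁) := htze b₁ hb₁0 hb₁σ
      have hab₁eq : v a₁ = v b₁ := by
        rcases lt_trichotomy (v a₁) (v b₁) with h | h | h
        · have := (hmin a₁ b₁ ha₁0 hb₁0 h).2
          rw [hz₁ab] at this
          obtain ⟨r, hr⟩ := ha₁e; omega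
        · exact h
        · have := (hmin b₁ a₁ hb₁0 ha₁0 h).2
          rw [add_comm, hz₁ab] at this
          obtain ⟨r, hr⟩ := hb₁e; omega
      have ha₁lt : v a₁ ≤ 0 := by
        have := hadd a₁ b₁ ha₁0 hb₁0 (by rw [hz₁ab]; exact hz₁0)
        rw [hz₁ab] at this
        obtain ⟨r, hr⟩ := ha₁e; omega
      have hη''0 : b₁ / a₁ ≠ 0 := div_ne_zero hb₁0 ha₁0
      have hη''σ : σ (b₁ / a₁) = -(b₁ / a₁) := by rw [map_div₀, hb₁σ, ha₁σ, neg_div]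
      have hη''unit : v (b₁ / a₁) = 0 := by rw [hvdiv _ _ hb₁0 ha₁0]; omega
      have h1η'' : (1 : E) + b₁ / a₁ = z₁ / a₁ := by
        rw [eq_div_iff ha₁0, add_mul, one_mul, div_mul_cancel₀ _ ha₁0]
        exact hz₁ab
      have hη''v : v (z₁ / a₁) = 1 - v a₁ := by rw [hvdiv _ _ hz₁0 ha₁0, hz₁v]
      have hc'' := hbnd (b₁/a₁) hη''0 hη''σ hη''unit
      rw [h1η'', hη''v] at hc''
      -- f ≤ v 2 - 1
      have hfT : f ≤ v 2 - 1 := by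
        obtain ⟨t, ht⟩ := hTe; obtain ⟨j, hj⟩ := hfo; obtain ⟨r, hr⟩ := ha₁e; omega
      -- analyze z₀
      have ha₀2 : v a₀ ≤ -(v 2) - 2 := by
        obtain ⟨t, ht⟩ := hTe; obtain ⟨p, hp⟩ := ha₀e; omega
      have hb₀0 : b₀ ≠ 0 := by
        intro h
        have hz₀a : z₀ = a₀ := by rw [hb₀def] at h; exact sub_eq_zero.mp h
        rw [hz₀a] at hz₀v; omega
      have hb₀e : Even (v b₀) := htze b₀ hb₀0 hb₀σ
      have hb₀a₀ : v b₀ = v a₀ := by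
        rcases lt_trichotomy (v a₀) (v b₀) with h | h | h
        · have := (hmin a₀ b₀ ha₀0 hb₀0 h).2
          rw [← hz₀ab] at this; omega
        · exact h.symm
        · have := (hmin b₀ a₀ hb₀0 ha₀0 h).2
          rw [add_comm, ← hz₀ab] at this; omega
      set η := b₀ / a₀ with hηdef
      have hη0 : η ≠ 0 := div_ne_zero hb₀0 ha₀0
      have hησ : σ η = -η := by rw [hηdef, map_div₀, hb₀σ, ha₀σ, neg_div]
      have hηv : v η = 0 := by rw [hηdef, hvdiv _ _ hb₀0 ha₀0]; omega
      have h1η : (1:E) + η = z₀ / a₀ := by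
        rw [hηdef, eq_div_iff ha₀0, add_mul, one_mul, div_mul_cancel₀ _ ha₀0]
        exact hz₀ab.symm
      have h1η0 : (1:E) + η ≠ 0 := by rw [h1η]; exact div_ne_zero hz₀0 ha₀0
      have hv₁ : v (1 + η) = -f - 1 - v a₀ := by
        rw [h1η, hvdiv _ _ hz₀0 ha₀0, hz₀v]
      have hv₁eq : v (1 + η) = v 2 + 1 - f := by
        have := hbnd η hη0 hησ hηv; omega
      set u := (b₁ / a₁) / η with hudef
      have hu0 : u ≠ 0 := div_ne_zero hη''0 hη0
      have huσ : σ u = u := by rw [hudef, map_div₀, hη''σ, hησ, neg_div_neg_eq]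
      have hvu : v u = 0 := by
        rw [hudef, hvdiv _ _ hη''0 hη0, hη''unit, hηv]; omega
      have huη : u * η = b₁ / a₁ := div_mul_cancel₀ _ hη0
      have hkey : (1 + b₁ / a₁) + -(u * (1 + η)) = 1 - u := by
        rw [mul_add, mul_one, huη]; ring
      have hx0' : (1:E) + b₁ / a₁ ≠ 0 := by rw [h1η'']; exact div_ne_zero hz₁0 ha₁0
      have hy0' : u * (1 + η) ≠ 0 := mul_ne_zero hu0 h1η0
      have hvy : v (-(u * (1 + η))) = v 2 + 1 - f := by
        rw [hvneg _ hy0', hmul _ _ hu0 h1η0, hvu, hv₁eq]; ring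
      have hlt : v (1 + b₁ / a₁) < v (-(u * (1 + η))) := by
        rw [h1η'', hη''v, hvy]
        obtain ⟨t, ht⟩ := hTe; obtain ⟨j, hj⟩ := hfo; obtain ⟨r, hr⟩ := ha₁e; omega
      obtain ⟨hne1u, hv1u⟩ := hmin _ _ hx0' (neg_ne_zero.mpr hy0') hlt
      rw [hkey] at hne1u hv1u
      have hfix1u : σ (1 - u) = 1 - u := by rw [map_sub, map_one, huσ]
      obtain ⟨r, hr⟩ := hBfix (1 - u) hne1u hfix1u
      rw [h1η'', hη''v] at hv1u
      obtain ⟨p, hp⟩ := ha₁e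
      omega
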